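/- Let Λ⁺ ⪰ 0 diagonal n×n, Λ⁻ ⪯ 0 diagonal m×m, R an m×n matrix with I - RᵀR ⪰ 0. Then for all w⁺ ∈ ℝⁿ, w⁻ ∈ ℝᵐ (no boundary condition imposed), the weak homogeneous boundary term (w⁺)ᵀΛ⁺w⁺ + (w⁻)ᵀΛ⁻w⁻ + 2(w⁻)ᵀ√|Λ⁻|(√|Λ⁻| w⁻ - R√Λ⁺ w⁺) is nonnegative. -/

import Mathlib

open Matrix

/-- Weak homogeneous boundary conditions with penalty `Σ = √|Λ⁻|`: for all `w⁺, w⁻`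
the weak boundary term is nonnegative when `I - RᵀR ⪰ 0`. -/
theorem stmt6 (n m : ℕ) (lp : Fin n → ℝ) (lm : Fin m → ℝ)
    (hlp : ∀ i, 0 ≤ lp i) (hlm : ∀ i, lm i ≤ 0)
    (R : Matrix (Fin m) (Fin n) ℝ)
    (hR : ((1 : Matrix (Fin n) (Fin n) ℝ) - Rᵀ * R).PosSemidef)
    (wp : Fin n → ℝ) (wm : Fin m → ℝ) :
    0 ≤ ∑ i, lp i * (wp i) ^ 2 + ∑ i, lm i * (wm i) ^ 2 +
      2 * ∑ i, wm i * Real.sqrt (-(lm i)) *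
        (Real.sqrt (-(lm i)) * wm i
          - (R.mulVec (fun j => Real.sqrt (lp j) * wp j)) i) := by
  set a : Fin n → ℝ := fun j => Real.sqrt (lp j) * wp j with ha
  set c : Fin m → ℝ := fun i => Real.sqrt (-(lm i)) * wm i with hc
  have h1 : ∀ j, lp j * (wp j) ^ 2 = (a j) ^ 2 := by
    intro j
    simp only [ha, mul_pow, Real.sq_sqrt (hlp j)]
  have h2 : ∀ i, lm i * (wm i) ^ 2 = -((c i) ^ 2) := by
    intro i
    simp only [hc, mul_pow, Real.sq_sqrt (by linarith [hlm i] : 0 ≤ -(lm i))]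
    ring
  -- PSD inequality: ‖R a‖² ≤ ‖a‖²
  have hpsd := hR.dotProduct_mulVec_nonneg a
  have hA : ∑ i, (R *ᵥ a) i ^ 2 ≤ ∑ j, a j ^ 2 := by
    have e : star a ⬝ᵥ (((1 : Matrix (Fin n) (Fin n) ℝ) - Rᵀ * R) *ᵥ a)
        = ∑ j, a j ^ 2 - ∑ i, (R *ᵥ a) i ^ 2 := by
      rw [sub_mulVec, dotProduct_sub, one_mulVec, ← Matrix.mulVec_mulVec,
        dotProduct_mulVec, star_trivial]
      have h3 : a ⬝ᵥ a = ∑ j, a j ^ 2 := by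
        simp [dotProduct, pow_two]
      have h4 : a ᵥ* Rᵀ ⬝ᵥ (R *ᵥ a) = ∑ i, (R *ᵥ a) i ^ 2 := by
        rw [vecMul_transpose]
        simp [dotProduct, pow_two]
      rw [h3, h4]
    rw [e] at hpsd
    linarith
  have hB : 2 * ∑ i, c i * (R *ᵥ a) i ≤ ∑ i, c i ^ 2 + ∑ i, (R *ᵥ a) i ^ 2 := by
    have : 0 ≤ ∑ i, (c i - (R *ᵥ a) i) ^ 2 :=
      Finset.sum_nonneg fun i _ => sq_nonneg _
    have e : ∑ i, (c i - (R *ᵥ a) i) ^ 2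
        = ∑ i, c i ^ 2 + ∑ i, (R *ᵥ a) i ^ 2 - 2 * ∑ i, c i * (R *ᵥ a) i := by
      rw [Finset.mul_sum, ← Finset.sum_add_distrib, ← Finset.sum_sub_distrib]
      exact Finset.sum_congr rfl fun i _ => by ring
    linarith [e ▸ this]
  have h5 : ∑ i, wm i * Real.sqrt (-(lm i)) *
        (Real.sqrt (-(lm i)) * wm i - (R *ᵥ a) i)
      = ∑ i, c i ^ 2 - ∑ i, c i * (R *ᵥ a) i := by
    rw [← Finset.sum_sub_distrib]
    exact Finset.sum_congr rfl fun i _ => by simp only [hc]; ring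
  simp only [Finset.sum_congr rfl fun j _ => h1 j,
    Finset.sum_congr rfl fun i _ => h2 i, h5, Finset.sum_neg_distrib]
  linarith
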